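/- arXiv:2407.16814 — 6 statements merged into one kernel-verified Lean document; each statement's English description precedes it below -/
import Mathlib

section
/- Let β ∈ F_q* (so β^q = β after fixing β ∈ F_q), and let A ∈ F_{q^m}^n be given with A_j = Σ_{i=0}^{n-1} a_i (βξ^j)^i. Then all a_i lie in F_q if and only if A_j^q = A_{(qj) mod n} for all j = 0, 1, ..., n-1. -/
/-- conjugate symmetry property. With `β ∈ F_q` (i.e. `β^q = β`) nonzero,
all components `aᵢ` of the inverse FFFT of `A` lie in `F_q` (characterized by
`x^q = x`) if and only if `Aⱼ^q = A_{(qj) mod n}` for all `j`. -/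
theorem fFFT_conjugate_symmetry
    (p s q m n : ℕ) (hp : p.Prime) (hs : 0 < s) (hq : q = p ^ s) (hm : 0 < m)
    (hn : 0 < n) (F : Type*) [Field F] [Fintype F]
    (hcard : Fintype.card F = q ^ m) (hdvd : n ∣ q ^ m - 1)
    (ξ β : F) (hξ : IsPrimitiveRoot ξ n) (hβ : β ≠ 0) (hβq : β ^ q = β)
    (a A : Fin n → F)
    (hA : ∀ j : Fin n, A j = ∑ i : Fin n, a i * (β * ξ ^ (j : ℕ)) ^ (i : ℕ)) :
    (∀ i : Fin n, (a i) ^ q = a i) ↔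
      (∀ j : Fin n, (A j) ^ q = A ⟨(q * (j : ℕ)) % n, Nat.mod_lt _ hn⟩) := by
  classical
  -- The characteristic of F is p
  have hq0 : 0 < q := hq ▸ pow_pos hp.pos s
  have hq1 : 1 ≤ q ^ m := Nat.one_le_pow _ _ hq0
  haveI : CharP F (ringChar F) := ringChar.charP F
  have hcp : (ringChar F).Prime := CharP.char_is_prime F (ringChar F)
  obtain ⟨k, hkp, hk⟩ := FiniteField.card F (ringChar F)
  have hrc : ringChar F = p := by
    have hdvd' : ringChar F ∣ p ^ (s * m) := by
      have heq : ringChar F ^ (k : ℕ) = p ^ (s * m) := by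
        rw [← hk, hcard, hq, ← pow_mul]
      exact heq ▸ dvd_pow_self (ringChar F) k.pos.ne'
    exact (Nat.prime_dvd_prime_iff_eq hcp hp).mp (hcp.dvd_of_dvd_pow hdvd')
  haveI : CharP F p := hrc ▸ ringChar.charP F
  haveI : ExpChar F p := ExpChar.prime hp
  -- Frobenius x ↦ x^q is a ring hom
  have frob_sum : ∀ (g : Fin n → F), (∑ i : Fin n, g i) ^ q =
      ∑ i : Fin n, (g i) ^ q := by
    intro g
    simpa only [iterateFrobenius_def, ← hq] using
      map_sum (iterateFrobenius F p s) g Finset.univ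
  have hξn : ξ ^ n = 1 := hξ.pow_eq_one
  have hqm : q ^ m % n = 1 % n := by
    obtain ⟨c, hc⟩ := hdvd
    have : q ^ m = n * c + 1 := by omega
    rw [this, Nat.mul_add_mod]
  -- key computation: A j ^ q expressed as a sum with a^q
  have key : ∀ j : Fin n, (A j) ^ q =
      ∑ i : Fin n, (a i) ^ q * (β * ξ ^ ((q * (j : ℕ)) % n)) ^ (i : ℕ) := by
    intro j
    rw [hA j, frob_sum]
    refine Finset.sum_congr rfl fun i _ => ?_
    rw [mul_pow, ← pow_mul, mul_comm (i : ℕ) q, pow_mul, mul_pow, hβq,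
      ← pow_mul, mul_comm ((j : ℕ)) q, ← pow_eq_pow_mod _ hξn, pow_mul]
  constructor
  · intro ha j
    rw [key j, hA ⟨(q * (j : ℕ)) % n, Nat.mod_lt _ hn⟩]
    exact Finset.sum_congr rfl fun i _ => by rw [ha i]
  · intro hAq
    -- for each k, ∑ aᵢ^q (βξᵏ)ⁱ = ∑ aᵢ (βξᵏ)ⁱ
    have heval : ∀ k : Fin n,
        ∑ i : Fin n, ((a i) ^ q - a i) * (β * ξ ^ (k : ℕ)) ^ (i : ℕ) = 0 := by
      intro k
      have hm1 : m - 1 + 1 = m := Nat.succ_pred_eq_of_pos hm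
      set j : Fin n := ⟨(q ^ (m - 1) * (k : ℕ)) % n, Nat.mod_lt _ hn⟩ with hj
      have hidx : (q * (j : ℕ)) % n = (k : ℕ) := by
        show (q * ((q ^ (m - 1) * (k : ℕ)) % n)) % n = (k : ℕ)
        rw [Nat.mul_mod, Nat.mod_mod_of_dvd _ dvd_rfl, ← Nat.mul_mod, ← mul_assoc,
          ← pow_succ', hm1, Nat.mul_mod, hqm, ← Nat.mul_mod, one_mul,
          Nat.mod_eq_of_lt k.isLt]
      have h1 := hAq j
      rw [key j] at h1
      have h2 : (⟨(q * (j : ℕ)) % n, Nat.mod_lt _ hn⟩ : Fin n) = k := Fin.ext hidx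
      rw [h2, hA k, hidx] at h1
      simp only [sub_mul, Finset.sum_sub_distrib, h1, sub_self]
    -- polynomial argument
    set P : Polynomial F :=
      ∑ i : Fin n, Polynomial.C ((a i) ^ q - a i) * Polynomial.X ^ (i : ℕ) with hP
    have hdeg : P.natDegree < n := by
      have : P.natDegree ≤ n - 1 := by
        apply Polynomial.natDegree_sum_le_of_forall_le
        intro i _
        exact (Polynomial.natDegree_C_mul_X_pow_le _ _).trans
          (Nat.le_sub_one_of_lt i.isLt)
      omega
    have hinj : Function.Injective (fun k : Fin n => β * ξ ^ (k : ℕ)) := by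
      intro i j h
      refine Fin.ext (hξ.pow_inj i.isLt j.isLt ?_)
      field_simp at h
      simpa [hβ] using h
    have hP0 : P = 0 := by
      apply Polynomial.eq_zero_of_natDegree_lt_card_of_eval_eq_zero P hinj
      · intro k
        simpa [hP, Polynomial.eval_finset_sum, mul_comm] using heval k
      · simpa using hdeg
    intro i
    have hc := congrArg (fun Q => Polynomial.coeff Q (i : ℕ)) hP0
    simp only [hP, Polynomial.finset_sum_coeff, Polynomial.coeff_C_mul,
      Polynomial.coeff_X_pow, Polynomial.coeff_zero, mul_ite, mul_one, mul_zero,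
      Fin.val_eq_val] at hc
    rw [Finset.sum_ite_eq Finset.univ i (fun j => (a j) ^ q - a j)] at hc
    simp only [Finset.mem_univ, if_true] at hc
    exact sub_eq_zero.mp hc
end

section
/- Let C be a λ-constacyclic code of length n over F_q generated by g(x) of degree n - k with λ = λ^{-1}. Then C^⊥ ⊆ C if and only if g(x)·g†(x) divides x^n - λ, where g†(x) = x^{n-k} g(1/x). -/
open Polynomial

/-- The `λ`-constacyclic code of length `n` over `F` generated by `g`, viewed as a set
of vectors: `v` is a codeword iff its associated polynomial lies in the ideal
generated by `g` in `F[x]/⟨xⁿ - λ⟩`. -/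
def constaCode (F : Type*) [Field F] (n : ℕ) (lam : F) (g : F[X]) : Set (Fin n → F) :=
  {v | Ideal.Quotient.mk (Ideal.span {(X : F[X]) ^ n - C lam})
        (∑ i : Fin n, C (v i) * X ^ (i : ℕ)) ∈
      Ideal.span {Ideal.Quotient.mk (Ideal.span {(X : F[X]) ^ n - C lam}) g}}

namespace ConstaAux

variable {F : Type*} [Field F]

/-- The polynomial attached to a vector. -/
noncomputable def vp (n : ℕ) (v : Fin n → F) : F[X] := ∑ i : Fin n, C (v i) * X ^ (i : ℕ)

lemma vp_coeff (n : ℕ) (v : Fin n → F) (m : ℕ) :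
    (vp n v).coeff m = if h : m < n then v ⟨m, h⟩ else 0 := by
  rw [vp, finset_sum_coeff]
  simp only [coeff_C_mul, coeff_X_pow, mul_ite, mul_one, mul_zero]
  by_cases h : m < n
  · rw [dif_pos h, Finset.sum_eq_single (⟨m, h⟩ : Fin n)]
    · simp
    · intro b _ hb
      rw [if_neg]
      intro hbm
      exact hb (by ext; simpa using hbm.symm)
    · simp
  · rw [dif_neg h, Finset.sum_eq_zero]
    intro b _
    rw [if_neg]
    intro hbm
    exact h (hbm ▸ b.isLt)

lemma vp_natDegree_le (n : ℕ) (v : Fin n → F) : (vp n v).natDegree ≤ n - 1 := by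
  rw [natDegree_le_iff_coeff_eq_zero]
  intro N hN
  rw [vp_coeff, dif_neg (by omega)]

lemma vp_coeffs {n : ℕ} (p : F[X]) (hp : p.natDegree ≤ n - 1) (hn : 0 < n) :
    vp n (fun i => p.coeff i) = p := by
  ext m
  rw [vp_coeff]
  by_cases h : m < n
  · rw [dif_pos h]
  · rw [dif_neg h]
    exact (coeff_eq_zero_of_natDegree_lt (by omega)).symm

lemma reflect_reflect' (N : ℕ) (p : F[X]) : reflect N (reflect N p) = p := by
  ext i
  simp [coeff_reflect, revAt_invol]

lemma reflect_zero' (p : F[X]) : reflect 0 p = p := by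
  ext i
  rw [coeff_reflect]
  congr 1
  rcases Nat.eq_zero_or_pos i with rfl | hi
  · simp
  · rw [revAt_eq_self_of_lt hi]

lemma reflect_ne_zero {N : ℕ} {p : F[X]} (hp : p ≠ 0) : reflect N p ≠ 0 := by
  intro h
  apply hp
  rw [← reflect_reflect' N p, h, reflect_zero]

lemma natDegree_reflect_le {N : ℕ} (p : F[X]) :
    (reflect N p).natDegree ≤ max N p.natDegree := by
  rw [natDegree_le_iff_coeff_eq_zero]
  intro i hi
  rw [coeff_reflect, revAt_eq_self_of_lt (by omega)]
  exact coeff_eq_zero_of_natDegree_lt (by omega)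

/-- Membership in the constacyclic code is plain divisibility by `g`. -/
lemma mem_code (n : ℕ) (lam : F) (g : F[X]) (hg : g ∣ ((X : F[X]) ^ n - C lam))
    (v : Fin n → F) : v ∈ constaCode F n lam g ↔ g ∣ vp n v := by
  have hmem : v ∈ constaCode F n lam g ↔
      Ideal.Quotient.mk (Ideal.span {(X : F[X]) ^ n - C lam}) (vp n v) ∈
        Ideal.span {Ideal.Quotient.mk (Ideal.span {(X : F[X]) ^ n - C lam}) g} := Iff.rfl
  rw [hmem, Ideal.mem_span_singleton]
  constructor
  · rintro ⟨c, hc⟩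
    obtain ⟨u, rfl⟩ := Ideal.Quotient.mk_surjective c
    rw [← map_mul, Ideal.Quotient.eq, Ideal.mem_span_singleton] at hc
    obtain ⟨d, hd⟩ := hc
    obtain ⟨e, he⟩ := hg
    have : vp n v = g * (u + e * d) := by
      rw [he] at hd
      linear_combination hd
    exact ⟨u + e * d, this⟩
  · rintro ⟨u, hu⟩
    exact ⟨Ideal.Quotient.mk _ u, by rw [← map_mul, ← hu]⟩

/-- The standard pairing is a coefficient of a polynomial product. -/
lemma pair_eq (n : ℕ) (hn : 0 < n) (v w : Fin n → F) :
    ∑ i : Fin n, v i * w i = (vp n v * reflect (n - 1) (vp n w)).coeff (n - 1) := by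
  calc ∑ i : Fin n, v i * w i
      = ∑ i : Fin n, (fun j : ℕ => (vp n v).coeff j * (vp n w).coeff j) (i : ℕ) := by
        refine Finset.sum_congr rfl fun i _ => ?_
        simp only [vp_coeff, dif_pos i.isLt]
    _ = ∑ j ∈ Finset.range n, (vp n v).coeff j * (vp n w).coeff j :=
        Fin.sum_univ_eq_sum_range (fun j => (vp n v).coeff j * (vp n w).coeff j) n
    _ = ∑ j ∈ Finset.range n,
          (vp n v).coeff j * (reflect (n - 1) (vp n w)).coeff (n - 1 - j) := by
        refine Finset.sum_congr rfl fun j hj => ?_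
        rw [Finset.mem_range] at hj
        rw [coeff_reflect, revAt_le (by omega : n - 1 - j ≤ n - 1)]
        congr 2
        omega
    _ = (vp n v * reflect (n - 1) (vp n w)).coeff (n - 1) := by
        rw [coeff_mul, Finset.Nat.sum_antidiagonal_eq_sum_range_succ_mk,
          show (n - 1).succ = n by omega]

/-- A vector is orthogonal to the whole code iff `xⁿ - λ` divides
`g · reflect (n-1) (vp w)`. -/
lemma dual_mem_iff (n k : ℕ) (hn : 0 < n) (hkn : k < n) (lam : F)
    (g : F[X]) (hg : g ∣ ((X : F[X]) ^ n - C lam)) (hdeg : g.natDegree = n - k)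
    (w : Fin n → F) :
    (∀ v : Fin n → F, g ∣ vp n v → ∑ i : Fin n, v i * w i = 0) ↔
      ((X : F[X]) ^ n - C lam) ∣ g * reflect (n - 1) (vp n w) := by
  set f : F[X] := (X : F[X]) ^ n - C lam with hf
  set R : F[X] := reflect (n - 1) (vp n w) with hR
  have hf_monic : f.Monic := monic_X_pow_sub_C lam hn.ne'
  have hfdeg : f.natDegree = n := natDegree_X_pow_sub_C
  have hfne : f ≠ 0 := hf_monic.ne_zero
  have hRdeg : R.natDegree ≤ n - 1 :=
    (natDegree_reflect_le (vp n w)).trans (max_le le_rfl (vp_natDegree_le n w))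
  constructor
  · intro hperp
    by_cases hgR : g * R = 0
    · rw [hgR]; exact dvd_zero f
    have hgRdeg : (g * R).natDegree ≤ (n - k) + (n - 1) :=
      natDegree_mul_le.trans (by rw [hdeg]; exact add_le_add le_rfl hRdeg)
    set c : F[X] := (g * R) %ₘ f with hc
    set q : F[X] := (g * R) /ₘ f with hq
    have hsplit : c + f * q = g * R := modByMonic_add_div (g * R) f
    have hqdeg : q.natDegree ≤ n - k - 1 := by
      have h1 : q.natDegree = (g * R).natDegree - f.natDegree :=
        natDegree_divByMonic (g * R) hf_monic
      omega
    have hgc : g ∣ c := by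
      have hceq : c = g * R - f * q := by linear_combination hsplit
      rw [hceq]
      exact dvd_sub (dvd_mul_right g R) (hg.mul_right q)
    have hcdeg : c.degree < (n : WithBot ℕ) := by
      have h1 := degree_modByMonic_lt (g * R) hf_monic
      have h2 : f.degree = (n : WithBot ℕ) := by rw [degree_eq_natDegree hfne, hfdeg]
      rw [h2] at h1
      exact h1
    have hcoeff : ∀ m : ℕ, n - k ≤ m → c.coeff m = 0 := by
      intro m hm
      by_cases hmn : n ≤ m
      · exact coeff_eq_zero_of_degree_lt (hcdeg.trans_le (by exact_mod_cast hmn))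
      · push_neg at hmn
        -- first: (g*R).coeff m = 0 using orthogonality with v = coeffs of g * X^(n-1-m)
        set j : ℕ := n - 1 - m with hj
        have hdegGXj : (g * X ^ j).natDegree ≤ n - 1 :=
          natDegree_mul_le.trans (by rw [hdeg, natDegree_X_pow]; omega)
        have hvp : vp n (fun i => (g * X ^ j).coeff i) = g * X ^ j :=
          vp_coeffs _ hdegGXj hn
        have h0 := hperp (fun i => (g * X ^ j).coeff i) (by rw [hvp]; exact dvd_mul_right g _)
        rw [pair_eq n hn _ w, hvp, ← hR] at h0
        have hrear : g * X ^ j * R = g * R * X ^ j := by ring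
        rw [hrear, coeff_mul_X_pow', if_pos (by omega : j ≤ n - 1),
          show n - 1 - j = m by omega] at h0
        -- now c.coeff m from the division identity
        have h2 : c.coeff m = (g * R).coeff m - (f * q).coeff m := by
          have : c = g * R - f * q := by linear_combination hsplit
          rw [this, coeff_sub]
        have h3 : f * q = q * X ^ n - C lam * q := by rw [hf]; ring
        have h4 : q.coeff m = 0 :=
          coeff_eq_zero_of_natDegree_lt (by omega)
        rw [h2, h0, h3, coeff_sub, coeff_mul_X_pow', if_neg (by omega), coeff_C_mul, h4]
        ring
    have hcdeg' : c.natDegree ≤ n - k - 1 := by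
      rw [natDegree_le_iff_coeff_eq_zero]
      intro N hN
      exact hcoeff N (by omega)
    have hc0 : c = 0 := eq_zero_of_dvd_of_natDegree_lt hgc (by omega)
    exact (modByMonic_eq_zero_iff_dvd hf_monic).mp hc0
  · intro hdvd v hv
    obtain ⟨u, hu⟩ := hv
    have hfdvd : f ∣ vp n v * R := by
      have : vp n v * R = (g * R) * u := by rw [hu]; ring
      rw [this]
      exact hdvd.mul_right u
    obtain ⟨t, ht⟩ := hfdvd
    rw [pair_eq n hn v w, ← hR, ht]
    by_cases ht0 : t = 0
    · simp [ht0]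
    have hdt : f.natDegree + t.natDegree ≤ (n - 1) + (n - 1) := by
      rw [← natDegree_mul hfne ht0, ← ht]
      exact natDegree_mul_le.trans (add_le_add (vp_natDegree_le n v) hRdeg)
    have htc : t.coeff (n - 1) = 0 :=
      coeff_eq_zero_of_natDegree_lt (by omega)
    have h3 : f * t = t * X ^ n - C lam * t := by rw [hf]; ring
    rw [h3, coeff_sub, coeff_mul_X_pow', if_neg (by omega), coeff_C_mul, htc]
    ring

end ConstaAux

/-- a `λ`-constacyclic code `C` (with `λ = λ⁻¹`) generated by `g` of
degree `n - k` is dual-containing (`C^⊥ ⊆ C`) iff `g·g†` divides `xⁿ - λ`,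
where `g† = x^{n-k} g(1/x)` is the reciprocal polynomial. -/
theorem constacyclic_dual_containing_iff
    (F : Type*) [Field F] (n k : ℕ) (hn : 0 < n) (hk : k ≤ n)
    (lam : F) (hunit : lam ≠ 0) (hlam : lam * lam = 1)
    (g : F[X]) (hg : g ∣ ((X : F[X]) ^ n - C lam)) (hdeg : g.natDegree = n - k) :
    (∀ w : Fin n → F,
        (∀ v ∈ constaCode F n lam g, ∑ i : Fin n, v i * w i = 0) →
          w ∈ constaCode F n lam g) ↔
      g * g.reflect (n - k) ∣ ((X : F[X]) ^ n - C lam) := by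
  classical
  set f : F[X] := (X : F[X]) ^ n - C lam with hf
  have hfne : f ≠ 0 := X_pow_sub_C_ne_zero hn lam
  have hfdeg : f.natDegree = n := natDegree_X_pow_sub_C
  have hgne : g ≠ 0 := by
    rintro rfl
    exact hfne (zero_dvd_iff.mp hg)
  obtain ⟨h, hfgh⟩ := hg
  have hhne : h ≠ 0 := by
    rintro rfl
    exact hfne (by rw [hfgh, mul_zero])
  have hdegh : h.natDegree = k := by
    have := natDegree_mul hgne hhne
    rw [← hfgh, hfdeg, hdeg] at this
    omega
  rcases eq_or_lt_of_le hk with hkeq | hkn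
  · -- k = n : g is a unit, both sides trivially hold
    have hdeg0 : g.natDegree = 0 := by omega
    have hgu : IsUnit g := by
      rw [eq_C_of_natDegree_eq_zero hdeg0]
      exact isUnit_C.mpr (isUnit_iff_ne_zero.mpr (by
        intro h0
        apply hgne
        rw [eq_C_of_natDegree_eq_zero hdeg0, h0, map_zero]))
    constructor
    · intro _
      rw [show n - k = 0 by omega, ConstaAux.reflect_zero']
      exact (hgu.mul hgu).dvd
    · intro _ w _
      rw [ConstaAux.mem_code n lam g ⟨h, hfgh⟩]
      exact hgu.dvd
  · -- k < n
    have key := fun w => ConstaAux.dual_mem_iff n k hn hkn lam g ⟨h, hfgh⟩ hdeg w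
    have hmc := ConstaAux.mem_code n lam g ⟨h, hfgh⟩
    constructor
    · intro H
      -- restated hypothesis
      have H' : ∀ w : Fin n → F,
          f ∣ g * reflect (n - 1) (ConstaAux.vp n w) → g ∣ ConstaAux.vp n w := by
        intro w hd
        exact (hmc w).mp (H w (fun v hv => (key w).mpr hd v ((hmc v).mp hv)))
      -- take w to be the coefficients of reflect (n-1) h
      have hrh : (reflect (n - 1) h).natDegree ≤ n - 1 :=
        (ConstaAux.natDegree_reflect_le h).trans (max_le le_rfl (by omega))
      set w : Fin n → F := fun i => (reflect (n - 1) h).coeff i with hw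
      have hvpw : ConstaAux.vp n w = reflect (n - 1) h := ConstaAux.vp_coeffs _ hrh hn
      have hgdvd : g ∣ reflect (n - 1) h := by
        rw [← hvpw]
        apply H' w
        rw [hvpw, ConstaAux.reflect_reflect', ← hfgh]
      obtain ⟨t, ht⟩ := hgdvd
      have hrhne : reflect (n - 1) h ≠ 0 := ConstaAux.reflect_ne_zero hhne
      by_cases hk0 : k = 0
      · exfalso
        have : reflect (n - 1) h = 0 :=
          eq_zero_of_dvd_of_natDegree_lt ⟨t, ht⟩ (by
            have := hrh
            omega)
        exact hrhne this
      · have ht0 : t ≠ 0 := by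
          rintro rfl
          rw [mul_zero] at ht
          exact hrhne ht
        have hdegt : t.natDegree ≤ k - 1 := by
          have h1 := natDegree_mul hgne ht0
          rw [← ht] at h1
          omega
        have hrefl : h = reflect (n - k) g * reflect (k - 1) t := by
          have h2 : h = reflect (n - 1) (g * t) := by
            rw [← ht, ConstaAux.reflect_reflect']
          rw [show n - 1 = (n - k) + (k - 1) by omega,
            reflect_mul g t (le_of_eq hdeg) hdegt] at h2
          exact h2
        exact ⟨reflect (k - 1) t, by rw [hfgh, hrefl]; ring⟩
    · intro hdvd w hwperp
      rw [hmc w]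
      have hfR : f ∣ g * reflect (n - 1) (ConstaAux.vp n w) :=
        (key w).mp (fun v hv => hwperp v ((hmc v).mpr hv))
      set R : F[X] := reflect (n - 1) (ConstaAux.vp n w) with hRdef
      have hhd : h ∣ R := by
        rw [hfgh] at hfR
        exact (mul_dvd_mul_iff_left hgne).mp hfR
      have hgdagh : reflect (n - k) g ∣ h := by
        have hdvd' := hdvd
        rw [hfgh] at hdvd'
        exact (mul_dvd_mul_iff_left hgne).mp hdvd'
      obtain ⟨s, hs⟩ := hgdagh.trans hhd
      by_cases hs0 : s = 0
      · have : ConstaAux.vp n w = 0 := by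
          rw [← ConstaAux.reflect_reflect' (n - 1) (ConstaAux.vp n w), ← hRdef, hs, hs0,
            mul_zero, reflect_zero]
        rw [this]
        exact dvd_zero g
      · -- degree of the reciprocal of g is exactly n - k
        have hg0ne : g.coeff 0 ≠ 0 := by
          intro h0
          have hev : f.coeff 0 = g.coeff 0 * h.coeff 0 := by rw [hfgh, mul_coeff_zero]
          have hfc : f.coeff 0 = -lam := by
            rw [hf, coeff_sub, coeff_X_pow, coeff_C_zero, if_neg (by omega), zero_sub]
          rw [hfc, h0, zero_mul] at hev
          exact hunit (neg_eq_zero.mp hev)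
        have hgdagne : reflect (n - k) g ≠ 0 := ConstaAux.reflect_ne_zero hgne
        have hgdagdeg : (reflect (n - k) g).natDegree = n - k := by
          refine le_antisymm ((ConstaAux.natDegree_reflect_le g).trans (by omega)) ?_
          apply le_natDegree_of_ne_zero
          rw [coeff_reflect, revAt_le (le_refl (n - k)), Nat.sub_self]
          exact hg0ne
        have hk1 : 1 ≤ k := by
          have hle := natDegree_le_of_dvd hdvd hfne
          rw [hfdeg, natDegree_mul hgne hgdagne, hdeg, hgdagdeg] at hle
          omega
        have hRne : R ≠ 0 := by
          rw [hs]
          exact mul_ne_zero hgdagne hs0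
        have hRdeg : R.natDegree ≤ n - 1 :=
          (ConstaAux.natDegree_reflect_le _).trans
            (max_le le_rfl (ConstaAux.vp_natDegree_le n w))
        have hsdeg : s.natDegree ≤ k - 1 := by
          have h1 := natDegree_mul hgdagne hs0
          rw [← hs, hgdagdeg] at h1
          omega
        have hvpw : ConstaAux.vp n w = g * reflect (k - 1) s := by
          have h2 : ConstaAux.vp n w = reflect (n - 1) R :=
            (ConstaAux.reflect_reflect' (n - 1) (ConstaAux.vp n w)).symm
          rw [hs, show n - 1 = (n - k) + (k - 1) by omega,
            reflect_mul (reflect (n - k) g) s (le_of_eq hgdagdeg) hsdeg,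
            ConstaAux.reflect_reflect'] at h2
          exact h2
        exact ⟨reflect (k - 1) s, hvpw⟩
end

section
/- Let L = p^η n with p prime, p ∤ n, and let C be a λ-constacyclic code of length L over F_q (char p) with generator g(x) = Π_{l=1}^{ρ₁} M_{i_l}(β^{-1}x)^{a_l} · Π_{l=1}^{ρ₂} M_{j_l}(β^{-1}x)^{b_l} M_{-j_l}(β^{-1}x)^{c_l}, where the M's are the irreducible factors corresponding to symmetric cosets C_{i_l} and asymmetric coset pairs (C_{j_l}, C_{-j_l}). Then C ⊆ C^⊥ if and only if 2a_l ≥ p^η for all l and b_l + c_l ≥ p^η for all l. -/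
open Polynomial

/-- The `q`-cyclotomic coset of `r` modulo `n`: `{r·qᵗ mod n : t ≥ 0}` (the powers
repeat with period at most `n`). -/
def qCoset (q n : ℕ) (r : ZMod n) : Finset (ZMod n) :=
  (Finset.range n).image (fun t => r * (q : ZMod n) ^ t)

/-- The minimal polynomial `M_r(x) = ∏_{i ∈ C_r} (x - ξⁱ)` associated with the
`q`-cyclotomic coset `C_r`. -/
noncomputable def cosetMinPoly (F : Type*) [Field F] (q n : ℕ) (ξ : F) (r : ZMod n) :
    Polynomial F :=
  ∏ i ∈ qCoset q n r, (Polynomial.X - Polynomial.C (ξ ^ i.val))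

private lemma prod_pow_dvd_prod_pow_iff {F : Type*} [Field F] {ι : Type*} [Fintype ι]
    {f : ι → F[X]} (hsf : Squarefree (∏ s, f s)) (hnu : ∀ s, ¬ IsUnit (f s))
    (m k : ι → ℕ) :
    (∏ s, f s ^ m s) ∣ (∏ s, f s ^ k s) ↔ ∀ s, m s ≤ k s := by
  classical
  constructor
  · intro hdvd s
    have hQ0 : (∏ s, f s) ≠ 0 := hsf.ne_zero
    have hf0 : f s ≠ 0 := fun h0 => hQ0 (Finset.prod_eq_zero (Finset.mem_univ s) h0)
    have hcop : ∀ t, t ≠ s → IsCoprime (f s) (f t) := by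
      intro t hts
      rw [← EuclideanDomain.gcd_isUnit_iff]
      apply hsf
      refine dvd_trans (mul_dvd_mul (EuclideanDomain.gcd_dvd_left (f s) (f t))
        (EuclideanDomain.gcd_dvd_right (f s) (f t))) ?_
      have h2 : ({s, t} : Finset ι).prod f ∣ ∏ u, f u :=
        Finset.prod_dvd_prod_of_subset _ _ f (Finset.subset_univ _)
      rwa [Finset.prod_pair (Ne.symm hts)] at h2
    have h3 : f s ^ m s ∣ f s ^ k s * ∏ t ∈ Finset.univ.erase s, f t ^ k t := by
      refine dvd_trans (Finset.dvd_prod_of_mem (fun u => f u ^ m u) (Finset.mem_univ s))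
        (hdvd.trans (dvd_of_eq ?_))
      exact (Finset.mul_prod_erase Finset.univ (fun u => f u ^ k u) (Finset.mem_univ s)).symm
    have hcop2 : IsCoprime (f s ^ m s) (∏ t ∈ Finset.univ.erase s, f t ^ k t) :=
      (IsCoprime.prod_right fun t ht =>
        (hcop t (Finset.ne_of_mem_erase ht)).pow_right).pow_left
    exact (pow_dvd_pow_iff hf0 (hnu s)).mp (hcop2.dvd_of_dvd_mul_right h3)
  · intro h
    exact Finset.prod_dvd_prod_of_dvd _ _ fun s _ => pow_dvd_pow _ (h s)

private lemma cosetMinPoly_comp_not_unit {F : Type*} [Field F] (q n : ℕ) (hn : 0 < n)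
    (ξ β : F) (hβ : β ≠ 0) (r : ZMod n) :
    ¬ IsUnit ((cosetMinPoly F q n ξ r).comp (C β⁻¹ * X)) := by
  classical
  unfold cosetMinPoly qCoset
  set s := (Finset.range n).image (fun t => r * (q : ZMod n) ^ t) with hs
  have hsne : s.Nonempty := ⟨r * (q : ZMod n) ^ 0,
    Finset.mem_image.mpr ⟨0, Finset.mem_range.mpr hn, rfl⟩⟩
  have hdeg : (∏ i ∈ s, (X - C (ξ ^ i.val)) : F[X]).natDegree = s.card := by
    rw [Polynomial.natDegree_prod _ _ (fun i _ => X_sub_C_ne_zero _),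
      Finset.sum_congr rfl (fun i _ => natDegree_X_sub_C _), Finset.sum_const, smul_eq_mul,
      mul_one]
  have hpos : 0 < ((∏ i ∈ s, (X - C (ξ ^ i.val))).comp (C β⁻¹ * X) : F[X]).natDegree := by
    rw [natDegree_comp, natDegree_C_mul_X _ (inv_ne_zero hβ), mul_one, hdeg]
    exact Finset.card_pos.mpr hsne
  exact not_isUnit_of_natDegree_pos _ hpos

/-- repeated-root constacyclic codes, weak self-duality. With
`L = pᶯ n`, `p ∤ n`, generator
`g = ∏ M_{i_l}(β⁻¹x)^{a_l} ∏ M_{j_l}(β⁻¹x)^{b_l} M_{-j_l}(β⁻¹x)^{c_l}` over symmetric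
cosets `C_{i_l}` and asymmetric pairs `(C_{j_l}, C_{-j_l})`, and dual generator `h†`,
one has `C ⊆ C^⊥` (i.e. `h† ∣ g`) iff `2a_l ≥ pᶯ` and `b_l + c_l ≥ pᶯ` for all `l`. -/
theorem repeatedRoot_weakly_self_dual_iff
    (F : Type*) [Field F] (p η n q L ρ₁ ρ₂ : ℕ) [Fact p.Prime] [CharP F p]
    (hpn : ¬ p ∣ n) (hn : 0 < n) (hL : L = p ^ η * n)
    (ξ β lam : F) (hξ : IsPrimitiveRoot ξ n) (hβ : β ≠ 0) (hlam : β ^ L = lam)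
    (i : Fin ρ₁ → ZMod n) (j : Fin ρ₂ → ZMod n)
    (a : Fin ρ₁ → ℕ) (b c : Fin ρ₂ → ℕ)
    (hsym : ∀ l, -(i l) ∈ qCoset q n (i l))
    (hasym : ∀ l, -(j l) ∉ qCoset q n (j l))
    (ha : ∀ l, a l ≤ p ^ η) (hb : ∀ l, b l ≤ p ^ η) (hc : ∀ l, c l ≤ p ^ η)
    (hfact : (X : F[X]) ^ L - C lam =
      C lam * (∏ l, ((cosetMinPoly F q n ξ (i l)).comp (C β⁻¹ * X)) ^ (p ^ η)) *
        ∏ l, ((cosetMinPoly F q n ξ (j l)).comp (C β⁻¹ * X) *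
              (cosetMinPoly F q n ξ (-(j l))).comp (C β⁻¹ * X)) ^ (p ^ η))
    (g hdag : F[X])
    (hg : g = (∏ l, ((cosetMinPoly F q n ξ (i l)).comp (C β⁻¹ * X)) ^ (a l)) *
      ∏ l, ((cosetMinPoly F q n ξ (j l)).comp (C β⁻¹ * X)) ^ (b l) *
            ((cosetMinPoly F q n ξ (-(j l))).comp (C β⁻¹ * X)) ^ (c l))
    (hh : hdag = (∏ l, ((cosetMinPoly F q n ξ (i l)).comp (C β⁻¹ * X)) ^ (p ^ η - a l)) *
      ∏ l, ((cosetMinPoly F q n ξ (-(j l))).comp (C β⁻¹ * X)) ^ (p ^ η - b l) *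
            ((cosetMinPoly F q n ξ (j l)).comp (C β⁻¹ * X)) ^ (p ^ η - c l)) :
    hdag ∣ g ↔ (∀ l, p ^ η ≤ 2 * a l) ∧ (∀ l, p ^ η ≤ b l + c l) := by
  classical
  have hN0 : p ^ η ≠ 0 := pow_ne_zero _ (Nat.Prime.ne_zero Fact.out)
  have hlam0 : lam ≠ 0 := hlam ▸ pow_ne_zero _ hβ
  set w : (Fin ρ₁ ⊕ (Fin ρ₂ ⊕ Fin ρ₂)) → F[X] :=
    Sum.elim (fun l => (cosetMinPoly F q n ξ (i l)).comp (C β⁻¹ * X))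
      (Sum.elim (fun l => (cosetMinPoly F q n ξ (j l)).comp (C β⁻¹ * X))
        (fun l => (cosetMinPoly F q n ξ (-(j l))).comp (C β⁻¹ * X))) with hw
  -- squarefreeness of the full product
  have hSsf : Squarefree ((X : F[X]) ^ n - C (β ^ n)) :=
    (separable_X_pow_sub_C' p n (β ^ n) hpn (pow_ne_zero n hβ)).squarefree
  have hprodQ : (∏ s, w s) =
      (∏ l, ((cosetMinPoly F q n ξ (i l)).comp (C β⁻¹ * X))) *
      ((∏ l, ((cosetMinPoly F q n ξ (j l)).comp (C β⁻¹ * X))) *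
       (∏ l, ((cosetMinPoly F q n ξ (-(j l))).comp (C β⁻¹ * X)))) := by
    simp only [hw, Fintype.prod_sum_type, Sum.elim_inl, Sum.elim_inr]
  have hSN : ((X : F[X]) ^ n - C (β ^ n)) ^ (p ^ η) = C lam * (∏ s, w s) ^ (p ^ η) := by
    have h1 : ((X : F[X]) ^ n - C (β ^ n)) ^ (p ^ η) = X ^ L - C lam := by
      rw [sub_pow_char_pow, ← pow_mul, ← map_pow, ← pow_mul, ← hlam, hL, Nat.mul_comm]
    rw [h1, hfact, hprodQ, ← Finset.prod_mul_distrib, mul_pow, Finset.prod_pow,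
      Finset.prod_pow, mul_assoc]
  have hQsf : Squarefree (∏ s, w s) := by
    refine Squarefree.squarefree_of_dvd ?_ hSsf
    refine (IsIntegrallyClosed.pow_dvd_pow_iff hN0).mp ⟨C lam, ?_⟩
    rw [hSN]; ring
  have hnu : ∀ s, ¬ IsUnit (w s) := by
    rintro (l | l | l) <;>
      exact cosetMinPoly_comp_not_unit q n hn ξ β hβ _
  have key := prod_pow_dvd_prod_pow_iff hQsf hnu
    (Sum.elim (fun l => p ^ η - a l)
      (Sum.elim (fun l => p ^ η - c l) (fun l => p ^ η - b l)))
    (Sum.elim a (Sum.elim b c))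
  have hgeq : g = ∏ s, w s ^ (Sum.elim a (Sum.elim b c) s) := by
    rw [hg]
    simp only [hw, Fintype.prod_sum_type, Sum.elim_inl, Sum.elim_inr,
      Finset.prod_mul_distrib]
  have hheq : hdag = ∏ s, w s ^ (Sum.elim (fun l => p ^ η - a l)
      (Sum.elim (fun l => p ^ η - c l) (fun l => p ^ η - b l)) s) := by
    rw [hh]
    simp only [hw, Fintype.prod_sum_type, Sum.elim_inl, Sum.elim_inr,
      Finset.prod_mul_distrib]
    ring
  rw [hgeq, hheq, key, Sum.forall, Sum.forall]
  simp only [Sum.elim_inl, Sum.elim_inr]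
  constructor
  · rintro ⟨h1, h2, h3⟩
    exact ⟨fun l => by have := h1 l; omega,
      fun l => by have := h2 l; have := h3 l; omega⟩
  · rintro ⟨h1, h2⟩
    exact ⟨fun l => by have := h1 l; omega,
      fun l => by have := h2 l; omega, fun l => by have := h2 l; omega⟩
end

section
/- With the same repeated-root setup, C^⊥ ⊆ C if and only if 2a_l ≤ p^η for all symmetric indices l and b_l + c_l ≤ p^η for all asymmetric pairs l. -/
open Polynomial

/-- Abstract divisibility lemma: for products of factors of a squarefree polynomial,
the generator divides the dual generator iff the exponent inequalities hold. -/
theorem aux_dual_containing {F : Type*} [Field F] {ρ₁ ρ₂ m : ℕ}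
    (A : Fin ρ₁ → F[X]) (Bp Cp : Fin ρ₂ → F[X])
    (hsq : Squarefree ((∏ l, A l) * ∏ l, Bp l * Cp l))
    (hAu : ∀ l, ¬ IsUnit (A l)) (hBu : ∀ l, ¬ IsUnit (Bp l))
    (a : Fin ρ₁ → ℕ) (b c : Fin ρ₂ → ℕ)
    (ha : ∀ l, a l ≤ m) (hc : ∀ l, c l ≤ m) :
    ((∏ l, A l ^ a l) * ∏ l, Bp l ^ b l * Cp l ^ c l ∣
      (∏ l, A l ^ (m - a l)) * ∏ l, Cp l ^ (m - b l) * Bp l ^ (m - c l))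
    ↔ (∀ l, 2 * a l ≤ m) ∧ (∀ l, b l + c l ≤ m) := by
  classical
  set P : F[X] := (∏ l, A l) * ∏ l, Bp l * Cp l with hP
  have hP0 : P ≠ 0 := hsq.ne_zero
  have cop : ∀ x y : F[X], x * y ∣ P → IsCoprime x y := by
    intro x y h
    rw [← EuclideanDomain.gcd_isUnit_iff]
    refine hsq _ (dvd_trans (mul_dvd_mul (EuclideanDomain.gcd_dvd_left x y)
      (EuclideanDomain.gcd_dvd_right x y)) h)
  have dA : ∀ l, A l ∣ ∏ l, A l := fun l => Finset.dvd_prod_of_mem _ (Finset.mem_univ l)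
  have dBC : ∀ l, Bp l * Cp l ∣ ∏ l, Bp l * Cp l :=
    fun l => Finset.dvd_prod_of_mem _ (Finset.mem_univ l)
  have copAA : ∀ l l', l ≠ l' → IsCoprime (A l) (A l') := by
    intro l l' hne
    refine cop _ _ (dvd_mul_of_dvd_left ?_ _)
    calc A l * A l' = ∏ k ∈ ({l, l'} : Finset (Fin ρ₁)), A k := by
          rw [Finset.prod_pair hne]
      _ ∣ ∏ k, A k := Finset.prod_dvd_prod_of_subset _ _ _ (Finset.subset_univ _)
  have copAB : ∀ l l', IsCoprime (A l) (Bp l') := fun l l' =>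
    cop _ _ (mul_dvd_mul (dA l) (dvd_trans (dvd_mul_right _ _) (dBC l')))
  have copAC : ∀ l l', IsCoprime (A l) (Cp l') := fun l l' =>
    cop _ _ (mul_dvd_mul (dA l) (dvd_trans (dvd_mul_left _ _) (dBC l')))
  have copBC : ∀ l, IsCoprime (Bp l) (Cp l) := fun l =>
    cop _ _ (dvd_mul_of_dvd_right (dBC l) _)
  have copBB : ∀ l l', l ≠ l' → IsCoprime (Bp l) (Bp l') := by
    intro l l' hne
    refine cop _ _ (dvd_mul_of_dvd_right ?_ _)
    calc Bp l * Bp l' ∣ (Bp l * Cp l) * (Bp l' * Cp l') :=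
          mul_dvd_mul (dvd_mul_right _ _) (dvd_mul_right _ _)
      _ = ∏ k ∈ ({l, l'} : Finset (Fin ρ₂)), (Bp k * Cp k) := by
          rw [Finset.prod_pair hne]
      _ ∣ ∏ k, Bp k * Cp k := Finset.prod_dvd_prod_of_subset _ _ _ (Finset.subset_univ _)
  have copBC' : ∀ l l', l ≠ l' → IsCoprime (Bp l) (Cp l') := by
    intro l l' hne
    refine cop _ _ (dvd_mul_of_dvd_right ?_ _)
    calc Bp l * Cp l' ∣ (Bp l * Cp l) * (Bp l' * Cp l') :=
          mul_dvd_mul (dvd_mul_right _ _) (dvd_mul_left _ _)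
      _ = ∏ k ∈ ({l, l'} : Finset (Fin ρ₂)), (Bp k * Cp k) := by
          rw [Finset.prod_pair hne]
      _ ∣ ∏ k, Bp k * Cp k := Finset.prod_dvd_prod_of_subset _ _ _ (Finset.subset_univ _)
  have hA0 : ∀ l, A l ≠ 0 := by
    intro l hz
    exact hP0 (by rw [hP]; simp [Finset.prod_eq_zero (Finset.mem_univ l) hz])
  have hB0 : ∀ l, Bp l ≠ 0 := by
    intro l hz
    refine hP0 ?_
    rw [hP, Finset.prod_eq_zero (Finset.mem_univ l) (by rw [hz]; simp), mul_zero]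
  constructor
  · intro hdvd
    constructor
    · intro l₀
      have h1 : A l₀ ^ a l₀ ∣ (∏ l, A l ^ (m - a l)) * ∏ l, Cp l ^ (m - b l) * Bp l ^ (m - c l) :=
        dvd_trans (dvd_mul_of_dvd_left (Finset.dvd_prod_of_mem (fun l => A l ^ a l) (Finset.mem_univ l₀)) _) hdvd
      have hre : (∏ l, A l ^ (m - a l)) * ∏ l, Cp l ^ (m - b l) * Bp l ^ (m - c l) =
          A l₀ ^ (m - a l₀) *
            ((∏ l ∈ Finset.univ.erase l₀, A l ^ (m - a l)) *
              ∏ l, Cp l ^ (m - b l) * Bp l ^ (m - c l)) := by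
        rw [← Finset.mul_prod_erase _ _ (Finset.mem_univ l₀)]; ring
      rw [hre] at h1
      have hcop : IsCoprime (A l₀ ^ a l₀)
          ((∏ l ∈ Finset.univ.erase l₀, A l ^ (m - a l)) *
            ∏ l, Cp l ^ (m - b l) * Bp l ^ (m - c l)) := by
        refine IsCoprime.pow_left (IsCoprime.mul_right ?_ ?_)
        · exact IsCoprime.prod_right fun l hl =>
            (copAA l₀ l (fun h => (Finset.mem_erase.mp hl).1 h.symm)).pow_right
        · exact IsCoprime.prod_right fun l _ =>
            ((copAC l₀ l).pow_right).mul_right ((copAB l₀ l).pow_right)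
      have h2 : A l₀ ^ a l₀ ∣ A l₀ ^ (m - a l₀) := hcop.dvd_of_dvd_mul_right h1
      have h3 : a l₀ ≤ m - a l₀ := (pow_dvd_pow_iff (hA0 l₀) (hAu l₀)).mp h2
      have := ha l₀; omega
    · intro l₀
      have h1 : Bp l₀ ^ b l₀ ∣ (∏ l, A l ^ (m - a l)) * ∏ l, Cp l ^ (m - b l) * Bp l ^ (m - c l) :=
        dvd_trans (dvd_mul_of_dvd_right (dvd_trans (dvd_mul_right _ _)
          (Finset.dvd_prod_of_mem (fun l => Bp l ^ b l * Cp l ^ c l) (Finset.mem_univ l₀))) _) hdvd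
      have hre : (∏ l, A l ^ (m - a l)) * ∏ l, Cp l ^ (m - b l) * Bp l ^ (m - c l) =
          Bp l₀ ^ (m - c l₀) *
            ((∏ l, A l ^ (m - a l)) * (Cp l₀ ^ (m - b l₀) *
              ∏ l ∈ Finset.univ.erase l₀, Cp l ^ (m - b l) * Bp l ^ (m - c l))) := by
        rw [← Finset.mul_prod_erase _ (fun l => Cp l ^ (m - b l) * Bp l ^ (m - c l))
          (Finset.mem_univ l₀)]; ring
      rw [hre] at h1
      have hcop : IsCoprime (Bp l₀ ^ b l₀)
          ((∏ l, A l ^ (m - a l)) * (Cp l₀ ^ (m - b l₀) *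
            ∏ l ∈ Finset.univ.erase l₀, Cp l ^ (m - b l) * Bp l ^ (m - c l))) := by
        refine IsCoprime.pow_left (IsCoprime.mul_right ?_ (IsCoprime.mul_right ?_ ?_))
        · exact IsCoprime.prod_right fun l _ => ((copAB l l₀).symm).pow_right
        · exact (copBC l₀).pow_right
        · refine IsCoprime.prod_right fun l hl => ?_
          have hne : l₀ ≠ l := fun h => (Finset.mem_erase.mp hl).1 h.symm
          exact ((copBC' l₀ l hne).pow_right).mul_right ((copBB l₀ l hne).pow_right)
      have h2 : Bp l₀ ^ b l₀ ∣ Bp l₀ ^ (m - c l₀) := hcop.dvd_of_dvd_mul_right h1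
      have h3 : b l₀ ≤ m - c l₀ := (pow_dvd_pow_iff (hB0 l₀) (hBu l₀)).mp h2
      have := hc l₀; omega
  · rintro ⟨h2a, hbc⟩
    refine mul_dvd_mul (Finset.prod_dvd_prod_of_dvd _ _ fun l _ =>
      pow_dvd_pow _ (by have := h2a l; omega)) (Finset.prod_dvd_prod_of_dvd _ _ fun l _ => ?_)
    have hbl : b l ≤ m - c l := by have := hbc l; have := hc l; omega
    have hcl : c l ≤ m - b l := by have := hbc l; omega
    calc Bp l ^ b l * Cp l ^ c l ∣ Bp l ^ (m - c l) * Cp l ^ (m - b l) :=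
          mul_dvd_mul (pow_dvd_pow _ hbl) (pow_dvd_pow _ hcl)
      _ = Cp l ^ (m - b l) * Bp l ^ (m - c l) := mul_comm _ _

/-- Composed coset minimal polynomials are not units (they have positive degree). -/
theorem cosetMinPoly_comp_not_isUnit (F : Type*) [Field F] (q n : ℕ) (hn : 0 < n)
    (ξ β : F) (hβ : β ≠ 0) (r : ZMod n) :
    ¬ IsUnit ((cosetMinPoly F q n ξ r).comp (C β⁻¹ * X)) := by
  refine not_isUnit_of_natDegree_pos _ ?_
  rw [natDegree_comp, natDegree_C_mul_X _ (inv_ne_zero hβ), mul_one]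
  unfold cosetMinPoly
  rw [natDegree_prod _ _ (fun k _ => X_sub_C_ne_zero _)]
  simp only [natDegree_X_sub_C, Finset.sum_const, smul_eq_mul, mul_one]
  refine Finset.card_pos.mpr ⟨r, ?_⟩
  exact Finset.mem_image.mpr ⟨0, Finset.mem_range.mpr hn, by simp⟩

/-- repeated-root constacyclic codes, dual-containment. With
`L = pᶯ n`, `p ∤ n`, generator
`g = ∏ M_{i_l}(β⁻¹x)^{a_l} ∏ M_{j_l}(β⁻¹x)^{b_l} M_{-j_l}(β⁻¹x)^{c_l}` over symmetric
cosets `C_{i_l}` and asymmetric pairs `(C_{j_l}, C_{-j_l})`, and dual generator `h†`,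
one has `C^⊥ ⊆ C` (i.e. `g ∣ h†`) iff `2a_l ≤ pᶯ` and `b_l + c_l ≤ pᶯ` for all `l`. -/
theorem repeatedRoot_dual_containing_iff
    (F : Type*) [Field F] (p η n q L ρ₁ ρ₂ : ℕ) [Fact p.Prime] [CharP F p]
    (hpn : ¬ p ∣ n) (hn : 0 < n) (hL : L = p ^ η * n)
    (ξ β lam : F) (hξ : IsPrimitiveRoot ξ n) (hβ : β ≠ 0) (hlam : β ^ L = lam)
    (i : Fin ρ₁ → ZMod n) (j : Fin ρ₂ → ZMod n)
    (a : Fin ρ₁ → ℕ) (b c : Fin ρ₂ → ℕ)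
    (hsym : ∀ l, -(i l) ∈ qCoset q n (i l))
    (hasym : ∀ l, -(j l) ∉ qCoset q n (j l))
    (ha : ∀ l, a l ≤ p ^ η) (hb : ∀ l, b l ≤ p ^ η) (hc : ∀ l, c l ≤ p ^ η)
    (hfact : (X : F[X]) ^ L - C lam =
      C lam * (∏ l, ((cosetMinPoly F q n ξ (i l)).comp (C β⁻¹ * X)) ^ (p ^ η)) *
        ∏ l, ((cosetMinPoly F q n ξ (j l)).comp (C β⁻¹ * X) *
              (cosetMinPoly F q n ξ (-(j l))).comp (C β⁻¹ * X)) ^ (p ^ η))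
    (g hdag : F[X])
    (hg : g = (∏ l, ((cosetMinPoly F q n ξ (i l)).comp (C β⁻¹ * X)) ^ (a l)) *
      ∏ l, ((cosetMinPoly F q n ξ (j l)).comp (C β⁻¹ * X)) ^ (b l) *
            ((cosetMinPoly F q n ξ (-(j l))).comp (C β⁻¹ * X)) ^ (c l))
    (hh : hdag = (∏ l, ((cosetMinPoly F q n ξ (i l)).comp (C β⁻¹ * X)) ^ (p ^ η - a l)) *
      ∏ l, ((cosetMinPoly F q n ξ (-(j l))).comp (C β⁻¹ * X)) ^ (p ^ η - b l) *
            ((cosetMinPoly F q n ξ (j l)).comp (C β⁻¹ * X)) ^ (p ^ η - c l)) :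
    g ∣ hdag ↔ (∀ l, 2 * a l ≤ p ^ η) ∧ (∀ l, b l + c l ≤ p ^ η) := by
  classical
  subst hL hlam hg hh
  -- the squarefree product of all (composed) coset minimal polynomials
  set PP : F[X] :=
    (∏ l, ((cosetMinPoly F q n ξ (i l)).comp (C β⁻¹ * X))) *
      ∏ l, ((cosetMinPoly F q n ξ (j l)).comp (C β⁻¹ * X) *
            (cosetMinPoly F q n ξ (-(j l))).comp (C β⁻¹ * X)) with hPP
  have hfact2 : (X : F[X]) ^ (p ^ η * n) - C (β ^ (p ^ η * n)) =
      C (β ^ (p ^ η * n)) * PP ^ (p ^ η) := by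
    rw [hfact, hPP, mul_pow, ← Finset.prod_pow, ← Finset.prod_pow, mul_assoc]
  have hfrob : ∀ x y : F[X], x ^ p ^ η = y ^ p ^ η → x = y := by
    intro x y h
    have h2 : (x - y) ^ p ^ η = 0 := by rw [sub_pow_char_pow, h, sub_self]
    have hpη : p ^ η ≠ 0 := pow_ne_zero η (Fact.out : p.Prime).ne_zero
    exact sub_eq_zero.mp ((pow_eq_zero_iff hpη).mp h2)
  have key : (X : F[X]) ^ n - C (β ^ n) = C (β ^ n) * PP := by
    refine hfrob _ _ ?_
    have e1 : ((X : F[X]) ^ n - C (β ^ n)) ^ p ^ η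
        = (X : F[X]) ^ (p ^ η * n) - C (β ^ (p ^ η * n)) := by
      rw [sub_pow_char_pow, ← pow_mul, ← C_pow, ← pow_mul, mul_comm n (p ^ η)]
    have e2 : (C (β ^ n) * PP) ^ p ^ η = C (β ^ (p ^ η * n)) * PP ^ (p ^ η) := by
      rw [mul_pow, ← C_pow, ← pow_mul, mul_comm n (p ^ η)]
    rw [e1, hfact2, ← e2]
  have hsep : ((X : F[X]) ^ n - C (β ^ n)).Separable :=
    separable_X_pow_sub_C' p n (β ^ n) hpn (pow_ne_zero n hβ)
  have hsq : Squarefree PP := by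
    have h1 : Squarefree (C (β ^ n) * PP) := key ▸ hsep.squarefree
    exact h1.of_mul_right
  have hAu : ∀ l, ¬ IsUnit ((cosetMinPoly F q n ξ (i l)).comp (C β⁻¹ * X)) :=
    fun l => cosetMinPoly_comp_not_isUnit F q n hn ξ β hβ _
  have hBu : ∀ l, ¬ IsUnit ((cosetMinPoly F q n ξ (j l)).comp (C β⁻¹ * X)) :=
    fun l => cosetMinPoly_comp_not_isUnit F q n hn ξ β hβ _
  exact aux_dual_containing
    (fun l => (cosetMinPoly F q n ξ (i l)).comp (C β⁻¹ * X))
    (fun l => (cosetMinPoly F q n ξ (j l)).comp (C β⁻¹ * X))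
    (fun l => (cosetMinPoly F q n ξ (-(j l))).comp (C β⁻¹ * X))
    hsq hAu hBu a b c ha hc
end

section
/- Let H be the (δ-1) × n matrix over F_{q^m} with entries H_{r,c} = (βξ^{b+r})^c for r = 0,...,δ-2 and c = 0,...,n-1, where ξ is a primitive n-th root of unity, β nonzero, b arbitrary, and n | q^m - 1 so that the elements βξ^b, ..., βξ^{b+δ-2} and (if needed) the column ratios are distinct. Then any δ-1 columns of H are linearly independent; consequently any nonzero vector in the null space of H has Hamming weight at least δ. -/
/-- BCH bound for constacyclic codes. For the `(δ-1) × n` parity check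
matrix `H` with entries `H r c = (β ξ^{b+r})^c`, any `δ-1` columns are linearly
independent, and consequently any nonzero vector in the null space of `H` has
Hamming weight at least `δ`. -/
theorem constacyclic_BCH_bound
    (F : Type*) [Field F] [DecidableEq F] (n δ b : ℕ) (hδ : 1 ≤ δ)
    (hδn : δ - 1 ≤ n) (hn : 0 < n) (ξ β : F)
    (hξ : IsPrimitiveRoot ξ n) (hβ : β ≠ 0)
    (H : Matrix (Fin (δ - 1)) (Fin n) F)
    (hH : ∀ (r : Fin (δ - 1)) (c : Fin n), H r c = (β * ξ ^ (b + (r : ℕ))) ^ (c : ℕ)) :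
    (∀ s : Fin (δ - 1) → Fin n, Function.Injective s →
        LinearIndependent F (fun k : Fin (δ - 1) => fun r : Fin (δ - 1) => H r (s k))) ∧
      (∀ v : Fin n → F, H.mulVec v = 0 → v ≠ 0 →
        δ ≤ (Finset.univ.filter (fun i => v i ≠ 0)).card) := by
  have hξ0 : ξ ≠ 0 := by
    intro h
    have := hξ.pow_eq_one
    rw [h, zero_pow hn.ne'] at this
    exact zero_ne_one this
  have main : ∀ s : Fin (δ - 1) → Fin n, Function.Injective s →
      LinearIndependent F (fun k : Fin (δ - 1) => fun r : Fin (δ - 1) => H r (s k)) := by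
    intro s hs
    set x : Fin (δ - 1) → F := fun k => ξ ^ ((s k : ℕ)) with hx
    have hxinj : Function.Injective x := by
      intro k k' h
      apply hs
      exact Fin.val_injective (hξ.pow_inj (s k).isLt (s k').isLt h)
    have hdet : (Matrix.vandermonde x).det ≠ 0 := by
      rw [Matrix.det_vandermonde]
      refine Finset.prod_ne_zero_iff.2 fun i _ => Finset.prod_ne_zero_iff.2 fun j hj => ?_
      have hij : i ≠ j := by
        intro h; subst h; exact absurd (Finset.mem_Ioi.1 hj) (lt_irrefl _)
      exact sub_ne_zero.2 fun h => hij (hxinj h.symm)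
    have hrows : LinearIndependent F (fun k => Matrix.vandermonde x k) :=
      Matrix.linearIndependent_rows_iff_isUnit.2
        ((Matrix.isUnit_iff_isUnit_det _).2 (isUnit_iff_ne_zero.2 hdet))
    set u : Fin (δ - 1) → Fˣ := fun k =>
      Units.mk0 ((β * ξ ^ b) ^ ((s k : ℕ)))
        (pow_ne_zero _ (mul_ne_zero hβ (pow_ne_zero _ hξ0))) with hu
    have := hrows.units_smul u
    convert this using 1
    funext k
    show (fun r : Fin (δ - 1) => H r (s k)) = u k • Matrix.vandermonde x k
    funext r
    simp only [hH, Pi.smul_apply, Matrix.vandermonde_apply, hu, Units.smul_def,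
      Units.smul_mk0, smul_eq_mul, Units.val_mk0, hx]
    rw [pow_add, ← mul_assoc, mul_pow, ← pow_mul, mul_comm (r : ℕ), pow_mul]
  refine ⟨main, ?_⟩
  intro v hv hv0
  by_contra hcard
  push_neg at hcard
  set S := Finset.univ.filter (fun i => v i ≠ 0) with hS
  have hcard' : S.card ≤ δ - 1 := by omega
  obtain ⟨T, hST, -, hT⟩ := Finset.exists_subsuperset_card_eq (Finset.subset_univ S)
    hcard' (by simpa using hδn)
  let e : T ≃ Fin (δ - 1) := T.equivFinOfCardEq hT
  set s : Fin (δ - 1) → Fin n := fun k => ((e.symm k : T) : Fin n) with hs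
  have hsinj : Function.Injective s :=
    Subtype.val_injective.comp e.symm.injective
  have hli := main s hsinj
  rw [Fintype.linearIndependent_iff] at hli
  have hzero : ∀ k, v (s k) = 0 := by
    apply hli
    funext r
    simp only [Finset.sum_apply, Pi.smul_apply, smul_eq_mul, Pi.zero_apply]
    have h1 : ∑ k : Fin (δ - 1), v (s k) * H r (s k)
        = ∑ c ∈ T, v c * H r c := by
      rw [← Finset.sum_coe_sort T (fun c => v c * H r c)]
      exact Fintype.sum_equiv e.symm _ _ (fun k => rfl)
    rw [h1]
    have h2 : ∑ c ∈ T, v c * H r c = ∑ c : Fin n, v c * H r c := by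
      refine Finset.sum_subset (Finset.subset_univ T) fun c _ hc => ?_
      have : v c = 0 := by
        by_contra hvc
        exact hc (hST (by simp [hS, hvc]))
      simp [this]
    rw [h2]
    have := congrFun hv r
    simp only [Matrix.mulVec, dotProduct, Pi.zero_apply] at this
    rw [← this]
    exact Finset.sum_congr rfl fun c _ => mul_comm _ _
  apply hv0
  funext c
  simp only [Pi.zero_apply]
  by_contra hvc
  have hcS : c ∈ S := by simp [hS, hvc]
  have hcT : c ∈ T := hST hcS
  have : v (s (e ⟨c, hcT⟩)) = 0 := hzero _
  simp only [hs, Equiv.symm_apply_apply] at this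
  exact hvc this
end

section
/- In the extended-Euclidean spectral decoding setting, suppose Γ(x)μ(x) ≡ P(x) mod (x^n - λ) and Γ'(x)μ(x) ≡ P'(x) mod (x^n - λ), with deg P + deg Γ' < n and deg P' + deg Γ < n. Then P(x)Γ'(x) = Γ(x)P'(x) as polynomials, and hence if Γ | P and Γ' | P' then P/Γ = P'/Γ'. -/
open Polynomial

/-- uniqueness of the key-equation solution in the spectral decoder.
If `Γμ ≡ P` and `Γ'μ ≡ P'` mod `xⁿ - λ` with `deg P + deg Γ' < n` and
`deg P' + deg Γ < n`, then `P Γ' = Γ P'` as polynomials; hence if `Γ ∣ P` and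
`Γ' ∣ P'` (with `Γ, Γ'` nonzero) then `P/Γ = P'/Γ'`. -/
theorem key_equation_uniqueness
    (F : Type*) [Field F] (n : ℕ) (hn : 0 < n) (lam : F) (hlam : lam ≠ 0)
    (μ Γ Γ' P P' : F[X]) (hμ : μ.natDegree < n)
    (h1 : ((X : F[X]) ^ n - C lam) ∣ (Γ * μ - P))
    (h2 : ((X : F[X]) ^ n - C lam) ∣ (Γ' * μ - P'))
    (hd1 : P.natDegree + Γ'.natDegree < n)
    (hd2 : P'.natDegree + Γ.natDegree < n) :
    P * Γ' = Γ * P' ∧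
      (Γ ∣ P → Γ' ∣ P' → Γ ≠ 0 → Γ' ≠ 0 → P / Γ = P' / Γ') := by
  have hdvd : ((X : F[X]) ^ n - C lam) ∣ (Γ * P' - P * Γ') := by
    have := dvd_sub (Dvd.dvd.mul_left h2 Γ) (Dvd.dvd.mul_left h1 Γ')
    have heq : Γ * (Γ' * μ - P') - Γ' * (Γ * μ - P) = -(Γ * P' - P * Γ') := by ring
    rw [heq] at this
    exact (dvd_neg).mp this
  have hdegmod : ((X : F[X]) ^ n - C lam).natDegree = n := by
    have : ((X : F[X]) ^ n).natDegree = n := natDegree_X_pow n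
    rw [natDegree_sub_eq_left_of_natDegree_lt]
    · exact this
    · rw [this, natDegree_C]
      exact hn
  have hmodne : ((X : F[X]) ^ n - C lam) ≠ 0 := by
    intro h
    rw [h] at hdegmod
    simp at hdegmod
    omega
  have hzero : Γ * P' - P * Γ' = 0 := by
    by_contra h
    have hle := Polynomial.natDegree_le_of_dvd hdvd h
    rw [hdegmod] at hle
    have h1' : (Γ * P').natDegree < n :=
      lt_of_le_of_lt natDegree_mul_le (by omega)
    have h2' : (P * Γ').natDegree < n :=
      lt_of_le_of_lt natDegree_mul_le (by omega)
    have := lt_of_le_of_lt (natDegree_sub_le _ _) (max_lt h1' h2')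
    omega
  have hmain : P * Γ' = Γ * P' := (sub_eq_zero.mp hzero).symm
  refine ⟨hmain, fun hΓP hΓ'P' hΓ hΓ' => ?_⟩
  obtain ⟨a, ha⟩ := hΓP
  obtain ⟨b, hb⟩ := hΓ'P'
  have hab : a = b := by
    have : Γ * Γ' * a = Γ * Γ' * b := by
      have := hmain
      rw [ha, hb] at this
      ring_nf at this ⊢
      linear_combination this
    exact mul_left_cancel₀ (mul_ne_zero hΓ hΓ') this
  rw [ha, hb, hab, mul_div_cancel_left₀ _ hΓ, mul_div_cancel_left₀ _ hΓ']
end
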